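/- (Globally non-resonant dyadic–triadic model) Let d ≥ 1 and let h be the dyadic–triadic potential on ℤ^d. Then 0 < h_n ≤ 2 for every n ∈ ℤ^d, and for every integer r_* ≥ 1, every a ∈ ℤ^d, and every function σ : ℤ^d → {−1,0,1} that vanishes outside the ball B_{r_*}(a) and is not identically zero, |∑_{n ∈ B_{r_*}(a)} σ_n·h_n| ≥ 2·3^{−2^{d−1}}·3^{−8^d·r_*^d}. (For the on-site Hamiltonian H_0 = ∑_n h_n Z_n this says: all fields are bounded by 2, and the minimal spectral gap of the restriction of H_0 to any subset of any ℓ¹-ball of radius r_*, which equals the minimum of 2·|∑ σ_n h_n| over nonzero σ ∈ {−1,0,1} supported in the subset, is at least 2·C_d·3^{−8^d·r_*^d} with C_d = 2·3^{−2^{d−1}}.) -/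

import Mathlib

/-- `bdig k n` is the `k`-th binary digit of the integer `n` (floor division). -/
def bdig (k : ℕ) (n : ℤ) : ℤ := (n / 2 ^ k) % 2

/-- `pm d m n = (∑_{k=0}^{m-1} 2^{dk}(1 + ∑_{j=1}^d 2^{j-1} b_k(n_j))) - 1`. -/
def pm (d m : ℕ) (n : Fin d → ℤ) : ℤ :=
  (∑ k ∈ Finset.range m, 2 ^ (d * k) * (1 + ∑ j : Fin d, 2 ^ (j : ℕ) * bdig k (n j))) - 1

/-- The dyadic–triadic potential `h_n = ∑_{m=1}^∞ 3^{−p_m(n)}`. -/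
noncomputable def hpot (d : ℕ) (n : Fin d → ℤ) : ℝ :=
  ∑' m : ℕ, (3 : ℝ) ^ (-(pm d (m + 1) n))


open Finset

lemma bdig_nonneg (k : ℕ) (n : ℤ) : 0 ≤ bdig k n := Int.emod_nonneg _ (by norm_num)

lemma bdig_le_one (k : ℕ) (n : ℤ) : bdig k n ≤ 1 := by
  have := Int.emod_lt_of_pos (n / 2 ^ k) (by norm_num : (0:ℤ) < 2)
  unfold bdig; omega

def cdig (d k : ℕ) (n : Fin d → ℤ) : ℤ := 1 + ∑ j : Fin d, 2 ^ (j : ℕ) * bdig k (n j)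

def PP (d m : ℕ) (n : Fin d → ℤ) : ℤ := ∑ k ∈ Finset.range m, 2 ^ (d * k) * cdig d k n

lemma pm_eq (d m : ℕ) (n : Fin d → ℤ) : pm d m n = PP d m n - 1 := rfl

lemma sum_two_pow (t : ℕ) : ∑ i ∈ range t, (2:ℤ)^i = 2^t - 1 := by
  induction t with
  | zero => simp
  | succ s ih => rw [sum_range_succ, ih]; ring

lemma one_le_cdig (d k : ℕ) (n : Fin d → ℤ) : 1 ≤ cdig d k n := by
  have : 0 ≤ ∑ j : Fin d, 2 ^ (j : ℕ) * bdig k (n j) :=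
    Finset.sum_nonneg fun j _ => mul_nonneg (by positivity) (bdig_nonneg _ _)
  unfold cdig; linarith

lemma cdig_le (d k : ℕ) (n : Fin d → ℤ) : cdig d k n ≤ 2 ^ d := by
  have h1 : ∑ j : Fin d, 2 ^ (j : ℕ) * bdig k (n j) ≤ ∑ j : Fin d, 2 ^ (j : ℕ) * 1 :=
    Finset.sum_le_sum fun j _ => mul_le_mul_of_nonneg_left (bdig_le_one _ _) (by positivity)
  have h2 : ∑ j : Fin d, (2:ℤ) ^ (j : ℕ) = 2 ^ d - 1 := by
    rw [Fin.sum_univ_eq_sum_range (fun j => (2:ℤ)^j) d]; exact sum_two_pow d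
  simp only [mul_one] at h1
  rw [h2] at h1
  unfold cdig; linarith

def Gg (d m : ℕ) : ℤ := ∑ k ∈ Finset.range m, 2^(d*k)

lemma Gg_le_PP (d m : ℕ) (n : Fin d → ℤ) : Gg d m ≤ PP d m n :=
  Finset.sum_le_sum fun k _ => le_mul_of_one_le_right (by positivity) (one_le_cdig d k n)

lemma PP_le (d m : ℕ) (n : Fin d → ℤ) : PP d m n ≤ 2^d * Gg d m := by
  rw [Gg, Finset.mul_sum]
  exact Finset.sum_le_sum fun k _ => by
    rw [mul_comm ((2:ℤ)^d)]
    exact mul_le_mul_of_nonneg_left (cdig_le d k n) (by positivity)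

lemma mulGg (d m : ℕ) : 2^d * Gg d m = Gg d (m+1) - 1 := by
  rw [Gg, Gg, Finset.mul_sum, Finset.sum_range_succ' (fun k => (2:ℤ)^(d*k)) m]
  simp only [mul_zero, pow_zero]
  have : ∀ k, (2:ℤ)^d * 2^(d*k) = 2^(d*(k+1)) := by
    intro k; rw [← pow_add]; congr 1; ring
  rw [Finset.sum_congr rfl fun k _ => this k]; ring

lemma le_Gg (d m : ℕ) : (m:ℤ) ≤ Gg d m := by
  induction m with
  | zero => simp [Gg]
  | succ s ih =>
    rw [Gg, sum_range_succ]
    have : (1:ℤ) ≤ 2^(d*s) := one_le_pow₀ (by norm_num)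
    rw [Gg] at ih; push_cast; linarith

lemma Gg_mono (d : ℕ) {m m' : ℕ} (h : m ≤ m') : Gg d m ≤ Gg d m' :=
  Finset.sum_le_sum_of_subset_of_nonneg (Finset.range_subset_range.mpr h)
    (fun k _ _ => by positivity)

lemma Gg_lt (d : ℕ) (hd : 1 ≤ d) (m : ℕ) : Gg d m < 2^(d*m) := by
  induction m with
  | zero => simp [Gg]
  | succ s ih =>
    rw [Gg, sum_range_succ, ← Gg]
    have h1 : (2:ℤ)^(d*s) * 2 ≤ 2^(d*(s+1)) := by
      rw [show d*(s+1) = d*s + d by ring, pow_add]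
      have : (2:ℤ) ≤ 2^d := by
        calc (2:ℤ) = 2^1 := (pow_one 2).symm
        _ ≤ 2^d := pow_le_pow_right₀ (by norm_num) hd
      nlinarith [pow_pos (show (0:ℤ) < 2 by norm_num) (d*s)]
    linarith

lemma PP_ge_m (d m : ℕ) (n : Fin d → ℤ) : (m:ℤ) ≤ PP d m n :=
  le_trans (le_Gg d m) (Gg_le_PP d m n)

lemma base_unique (b : ℤ) (hb : 2 ≤ b) :
    ∀ (m m' : ℕ) (f g : ℕ → ℤ), (∀ k, 1 ≤ f k ∧ f k ≤ b) → (∀ k, 1 ≤ g k ∧ g k ≤ b) →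
    (∑ k ∈ range m, b^k * f k) = (∑ k ∈ range m', b^k * g k) →
    m = m' ∧ ∀ k < m, f k = g k := by
  intro m
  induction m with
  | zero =>
    intro m' f g hf hg h
    cases m' with
    | zero => exact ⟨rfl, fun k hk => absurd hk (Nat.not_lt_zero k)⟩
    | succ s =>
      exfalso
      have hpos : 0 < ∑ k ∈ range (s+1), b^k * g k :=
        Finset.sum_pos (fun k _ => mul_pos (pow_pos (by linarith) k) (by linarith [(hg k).1]))
          (by simp)
      simp only [range_zero, sum_empty] at h
      linarith
  | succ s ih =>
    intro m' f g hf hg h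
    cases m' with
    | zero =>
      exfalso
      have hpos : 0 < ∑ k ∈ range (s+1), b^k * f k :=
        Finset.sum_pos (fun k _ => mul_pos (pow_pos (by linarith) k) (by linarith [(hf k).1]))
          (by simp)
      simp only [range_zero, sum_empty] at h
      linarith
    | succ s' =>
      rw [Finset.sum_range_succ' (fun k => b^k * f k) s,
          Finset.sum_range_succ' (fun k => b^k * g k) s'] at h
      simp only [pow_zero, one_mul] at h
      have hL : ∑ k ∈ range s, b^(k+1) * f (k+1) = b * ∑ k ∈ range s, b^k * f (k+1) := by
        rw [Finset.mul_sum]; exact Finset.sum_congr rfl fun k _ => by ring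
      have hR : ∑ k ∈ range s', b^(k+1) * g (k+1) = b * ∑ k ∈ range s', b^k * g (k+1) := by
        rw [Finset.mul_sum]; exact Finset.sum_congr rfl fun k _ => by ring
      rw [hL, hR] at h
      set X := ∑ k ∈ range s, b^k * f (k+1) with hX
      set Y := ∑ k ∈ range s', b^k * g (k+1) with hY
      have hdvd : b ∣ (f 0 - g 0) := ⟨Y - X, by linarith⟩
      have h0 : f 0 = g 0 := by
        have habs : |f 0 - g 0| < b := by
          rw [abs_lt]
          constructor <;> linarith [(hf 0).1, (hf 0).2, (hg 0).1, (hg 0).2]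
        have := Int.eq_zero_of_abs_lt_dvd hdvd habs
        linarith
      have hXY : X = Y := by
        have hb0 : b ≠ 0 := by linarith
        have : b * X = b * Y := by linarith
        exact mul_left_cancel₀ hb0 this
      obtain ⟨hm, hk⟩ := ih s' (fun k => f (k+1)) (fun k => g (k+1))
        (fun k => hf (k+1)) (fun k => hg (k+1)) hXY
      refine ⟨by omega, fun k hk' => ?_⟩
      cases k with
      | zero => exact h0
      | succ t => exact hk t (by omega)

lemma bits_unique (t : ℕ) (β γ : ℕ → ℤ) (hβ : ∀ k, 0 ≤ β k ∧ β k ≤ 1)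
    (hγ : ∀ k, 0 ≤ γ k ∧ γ k ≤ 1)
    (h : ∑ k ∈ range t, 2^k * β k = ∑ k ∈ range t, 2^k * γ k) : ∀ k < t, β k = γ k := by
  have e1 : ∑ k ∈ range t, (2:ℤ)^k * (β k + 1)
      = (∑ k ∈ range t, 2^k * β k) + ∑ k ∈ range t, 2^k := by
    rw [← Finset.sum_add_distrib]; exact Finset.sum_congr rfl fun k _ => by ring
  have e2 : ∑ k ∈ range t, (2:ℤ)^k * (γ k + 1)
      = (∑ k ∈ range t, 2^k * γ k) + ∑ k ∈ range t, 2^k := by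
    rw [← Finset.sum_add_distrib]; exact Finset.sum_congr rfl fun k _ => by ring
  have := base_unique 2 le_rfl t t (fun k => β k + 1) (fun k => γ k + 1)
    (fun k => ⟨show 1 ≤ β k + 1 by linarith [(hβ k).1], show β k + 1 ≤ 2 by linarith [(hβ k).2]⟩)
    (fun k => ⟨show 1 ≤ γ k + 1 by linarith [(hγ k).1], show γ k + 1 ≤ 2 by linarith [(hγ k).2]⟩)
    (by rw [e1, e2, h])
  intro k hk
  have h2 : β k + 1 = γ k + 1 := this.2 k hk
  linarith
lemma bdig_eq_of_cdig_eq (d k : ℕ) (n n' : Fin d → ℤ) (h : cdig d k n = cdig d k n') :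
    ∀ i : Fin d, bdig k (n i) = bdig k (n' i) := by
  classical
  set β : ℕ → ℤ := fun j => if hj : j < d then bdig k (n ⟨j, hj⟩) else 0 with hβdef
  set γ : ℕ → ℤ := fun j => if hj : j < d then bdig k (n' ⟨j, hj⟩) else 0 with hγdef
  have hsβ : ∑ j ∈ range d, (2:ℤ)^j * β j = ∑ j : Fin d, 2^(j:ℕ) * bdig k (n j) := by
    rw [← Fin.sum_univ_eq_sum_range (fun j => (2:ℤ)^j * β j) d]
    exact Finset.sum_congr rfl fun i _ => by simp [hβdef, i.isLt]
  have hsγ : ∑ j ∈ range d, (2:ℤ)^j * γ j = ∑ j : Fin d, 2^(j:ℕ) * bdig k (n' j) := by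
    rw [← Fin.sum_univ_eq_sum_range (fun j => (2:ℤ)^j * γ j) d]
    exact Finset.sum_congr rfl fun i _ => by simp [hγdef, i.isLt]
  have hsum : ∑ j ∈ range d, (2:ℤ)^j * β j = ∑ j ∈ range d, (2:ℤ)^j * γ j := by
    rw [hsβ, hsγ]
    have := h
    unfold cdig at this
    linarith
  have hb : ∀ j < d, β j = γ j := by
    refine bits_unique d β γ ?_ ?_ hsum
    · intro j
      by_cases hj : j < d <;> simp [hβdef, hj, bdig_nonneg, bdig_le_one]
    · intro j
      by_cases hj : j < d <;> simp [hγdef, hj, bdig_nonneg, bdig_le_one]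
  intro i
  have := hb i i.isLt
  simpa [hβdef, hγdef, i.isLt] using this

lemma dvd_of_bdig_eq (K : ℕ) (x y : ℤ) (h : ∀ k < K, bdig k x = bdig k y) :
    (2^K : ℤ) ∣ x - y := by
  induction K with
  | zero => simp
  | succ K ih =>
    obtain ⟨t, ht⟩ := ih (fun k hk => h k (by omega))
    have hb := h K (by omega)
    unfold bdig at hb
    have hx : x / 2^K = y / 2^K + t := by
      have hx' : x = y + t * 2^K := by linarith
      rw [hx']
      exact Int.add_mul_ediv_right y t (by positivity)
    rw [hx] at hb
    have h2 : (2:ℤ) ∣ t := by omega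
    obtain ⟨u, hu⟩ := h2
    exact ⟨u, by rw [ht, hu, pow_succ]; ring⟩

lemma eq_of_window (K : ℕ) (r x y c : ℤ) (hr : 2*r < 2^K)
    (hx : |x - c| ≤ r) (hy : |y - c| ≤ r) (hdvd : (2^K:ℤ) ∣ x - y) : x = y := by
  have h1 : |x - y| < 2^K := by
    have h2 : |x - y| ≤ |x - c| + |y - c| := by
      have := abs_sub_le x c y
      rwa [abs_sub_comm c y] at this
    linarith
  have := Int.eq_zero_of_abs_lt_dvd hdvd h1
  linarith

lemma inj_of_cdig (d K : ℕ) (r : ℕ) (a : Fin d → ℤ) (h2K : (2*(r:ℤ)) < 2^K)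
    (n n' : Fin d → ℤ) (hn : ∀ i, |n i - a i| ≤ (r:ℤ)) (hn' : ∀ i, |n' i - a i| ≤ (r:ℤ))
    (hc : ∀ k < K, cdig d k n = cdig d k n') : n = n' := by
  funext i
  refine eq_of_window K r (n i) (n' i) (a i) h2K (hn i) (hn' i) ?_
  exact dvd_of_bdig_eq K (n i) (n' i) (fun k hk => bdig_eq_of_cdig_eq d k n n' (hc k hk) i)

lemma PP_inj (d : ℕ) (hd : 1 ≤ d) (K : ℕ) (r : ℕ) (a : Fin d → ℤ)
    (h2K : (2*(r:ℤ)) < 2^K) (m m' : ℕ) (hm : K ≤ m) (hm' : K ≤ m')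
    (n n' : Fin d → ℤ) (hn : ∀ i, |n i - a i| ≤ (r:ℤ)) (hn' : ∀ i, |n' i - a i| ≤ (r:ℤ))
    (h : PP d m n = PP d m' n') : m = m' ∧ n = n' := by
  have hb : (2:ℤ) ≤ 2^d := by
    calc (2:ℤ) = 2^1 := (pow_one 2).symm
    _ ≤ 2^d := pow_le_pow_right₀ (by norm_num) hd
  have hPP : ∀ (mm : ℕ) (nn : Fin d → ℤ),
      PP d mm nn = ∑ k ∈ range mm, ((2:ℤ)^d)^k * cdig d k nn := by
    intro mm nn
    exact Finset.sum_congr rfl fun k _ => by rw [← pow_mul]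
  rw [hPP m n, hPP m' n'] at h
  obtain ⟨hmm, hk⟩ := base_unique (2^d) hb m m' (fun k => cdig d k n) (fun k => cdig d k n')
    (fun k => ⟨one_le_cdig d k n, cdig_le d k n⟩) (fun k => ⟨one_le_cdig d k n', cdig_le d k n'⟩) h
  exact ⟨hmm, inj_of_cdig d K r a h2K n n' hn hn'
    (fun k hk' => hk k (lt_of_lt_of_le hk' hm))⟩
lemma hterm (d m : ℕ) (n : Fin d → ℤ) : (3:ℝ) ^ (-(pm d m n)) = 3 ^ (1 - PP d m n) := by
  rw [pm_eq]; congr 1; ring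

lemma term_le (d m : ℕ) (n : Fin d → ℤ) :
    (3:ℝ) ^ (-(pm d (m+1) n)) ≤ ((3:ℝ)⁻¹) ^ m := by
  have h1 : -(pm d (m+1) n) ≤ (-(m:ℤ)) := by
    have := PP_ge_m d (m+1) n
    rw [pm_eq]; push_cast at this ⊢; linarith
  calc (3:ℝ) ^ (-(pm d (m+1) n)) ≤ 3 ^ (-(m:ℤ)) :=
        zpow_le_zpow_right₀ (by norm_num) h1
  _ = ((3:ℝ)⁻¹) ^ m := by rw [zpow_neg, zpow_natCast, ← inv_pow]

lemma summable_h (d : ℕ) (n : Fin d → ℤ) :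
    Summable (fun m => (3:ℝ) ^ (-(pm d (m+1) n))) :=
  Summable.of_nonneg_of_le (fun m => (zpow_pos (by norm_num) _).le)
    (fun m => term_le d m n)
    (summable_geometric_of_lt_one (by norm_num) (by norm_num))

lemma hpot_pos (d : ℕ) (n : Fin d → ℤ) : 0 < hpot d n :=
  Summable.tsum_pos (summable_h d n) (fun m => (zpow_pos (by norm_num) _).le) 0
    (zpow_pos (by norm_num) _)

lemma hpot_le_two (d : ℕ) (n : Fin d → ℤ) : hpot d n ≤ 2 := by
  have h1 : hpot d n ≤ ∑' m : ℕ, ((3:ℝ)⁻¹) ^ m :=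
    Summable.tsum_le_tsum (fun m => term_le d m n) (summable_h d n)
      (summable_geometric_of_lt_one (by norm_num) (by norm_num))
  have h2 : ∑' m : ℕ, ((3:ℝ)⁻¹) ^ m = (1 - 3⁻¹)⁻¹ :=
    tsum_geometric_of_lt_one (by norm_num) (by norm_num)
  rw [h2] at h1
  norm_num at h1
  linarith
set_option maxHeartbeats 2000000 in
lemma stmt6_aux (d : ℕ) (hd : 1 ≤ d) (r : ℕ) (hr : 1 ≤ r) (a : Fin d → ℤ)
    (σ : (Fin d → ℤ) → ℤ)
    (hσ : ∀ n, σ n = -1 ∨ σ n = 0 ∨ σ n = 1)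
    (hsupp : ∀ n, ¬ ((∑ i, |n i - a i|) ≤ (r : ℤ)) → σ n = 0)
    (hex : ∃ n, σ n ≠ 0) :
    2 * (3 : ℝ) ^ (-(2 ^ (d - 1) : ℤ)) * (3 : ℝ) ^ (-((8 ^ d * r ^ d : ℕ) : ℤ)) ≤
      |∑' n : Fin d → ℤ, (σ n : ℝ) * hpot d n| := by
  classical
  -- every support point is coordinatewise within r of a
  have hball : ∀ n : Fin d → ℤ, σ n ≠ 0 → ∀ i, |n i - a i| ≤ (r:ℤ) := by
    intro n hn i
    have hsum : (∑ i, |n i - a i|) ≤ (r : ℤ) := by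
      by_contra hcon
      exact hn (hsupp n hcon)
    have := Finset.single_le_sum (f := fun i => |n i - a i|)
      (fun i _ => abs_nonneg _) (Finset.mem_univ i)
    linarith
  -- choice of the cut level K
  set K : ℕ := (2*r).size with hKdef
  have hK2 : 2*r < 2^K := Nat.lt_size_self (2*r)
  have hKpos : 0 < K := Nat.size_pos.mpr (by omega)
  have hK4 : 2^K ≤ 4*r := by
    have h' : 2^(K-1) ≤ 2*r := by
      by_contra hcon
      push_neg at hcon
      have := Nat.size_le.mpr hcon
      omega
    have : 2^K = 2^(K-1) * 2 := by
      rw [← pow_succ]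
      congr 1
      omega
    omega
  have h2K : (2*(r:ℤ)) < 2^K := by exact_mod_cast hK2
  -- the support finset
  set box : Finset (Fin d → ℤ) := Fintype.piFinset fun i => Finset.Icc (a i - r) (a i + r)
    with hboxdef
  set F : Finset (Fin d → ℤ) := box.filter (fun n => σ n ≠ 0) with hFdef
  have hF : ∀ n, n ∈ F ↔ σ n ≠ 0 := by
    intro n
    constructor
    · intro h; exact (Finset.mem_filter.mp h).2
    · intro h
      refine Finset.mem_filter.mpr ⟨?_, h⟩
      refine Fintype.mem_piFinset.mpr fun i => ?_
      have hb := hball n h i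
      rw [abs_le] at hb
      rw [Finset.mem_Icc]
      constructor <;> linarith [hb.1, hb.2]
  have hFcoord : ∀ n ∈ F, ∀ i, |n i - a i| ≤ (r:ℤ) := fun n hn => hball n ((hF n).mp hn)
  -- the maximizer n0 of PP K over F
  obtain ⟨nw, hnw⟩ := hex
  obtain ⟨n0, hn0F, hmax⟩ := Finset.exists_max_image F (fun n => PP d K n) ⟨nw, (hF nw).mpr hnw⟩
  set q0 : ℤ := PP d K n0 with hq0def
  have hq0pos : 1 ≤ q0 := le_trans (by exact_mod_cast hKpos) (PP_ge_m d K n0)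
  set Q : ℕ := q0.toNat with hQdef
  have hQ : (Q:ℤ) = q0 := Int.toNat_of_nonneg (by linarith)
  have hq0ub : q0 ≤ 2^d * Gg d K := PP_le d K n0
  have hGK1 : (2:ℤ)^d * Gg d K = Gg d (K+1) - 1 := mulGg d K
  -- q0 ≤ 8^d r^d
  have hq0le : q0 ≤ ((8^d * r^d : ℕ) : ℤ) := by
    have hA1 : Gg d (K+1) ≤ 2^(d*(K+1)) := le_of_lt (Gg_lt d hd (K+1))
    have hA2 : (2:ℤ)^(d*(K+1)) ≤ ((8^d * r^d : ℕ) : ℤ) := by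
      have hKr : (2:ℤ)^(K+1) ≤ 8*r := by
        have : (2:ℕ)^(K+1) ≤ 8*r := by
          rw [pow_succ]
          omega
        exact_mod_cast this
      have hcast : ((8^d * r^d : ℕ) : ℤ) = (8*(r:ℤ))^d := by push_cast; ring
      rw [hcast, show d*(K+1) = (K+1)*d by ring, pow_mul]
      exact pow_le_pow_left₀ (by positivity) hKr d
    linarith
  -- reduce the tsum to a finite sum
  have hXsum : ∑' n : Fin d → ℤ, (σ n : ℝ) * hpot d n = ∑ n ∈ F, (σ n : ℝ) * hpot d n := by
    refine tsum_eq_sum fun n hn => ?_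
    have : σ n = 0 := by
      by_contra h
      exact hn ((hF n).mpr h)
    simp [this]
  -- split each hpot at level K
  set lows : (Fin d → ℤ) → ℝ := fun n => ∑ m ∈ Finset.range K, (3:ℝ)^(1 - PP d (m+1) n)
    with hlowsdef
  set tails : (Fin d → ℤ) → ℝ := fun n => ∑' j : ℕ, (3:ℝ)^(1 - PP d (j+K+1) n)
    with htailsdef
  have hsplit : ∀ n, hpot d n = lows n + tails n := by
    intro n
    have h0 := Summable.sum_add_tsum_nat_add K (summable_h d n)
    rw [hpot, ← h0]
    congr 1
    · exact Finset.sum_congr rfl fun m _ => hterm d (m+1) n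
    · exact tsum_congr fun j => hterm d (j+K+1) n
  set A : ℝ := ∑ n ∈ F, (σ n:ℝ) * lows n with hAdef
  set B : ℝ := ∑ n ∈ F, (σ n:ℝ) * tails n with hBdef
  have hXAB : ∑ n ∈ F, (σ n : ℝ) * hpot d n = A + B := by
    rw [hAdef, hBdef, ← Finset.sum_add_distrib]
    exact Finset.sum_congr rfl fun n _ => by rw [hsplit n]; ring
  -- exponent bounds for low terms
  have hPle : ∀ n ∈ F, ∀ m < K, PP d (m+1) n ≤ q0 := by
    intro n hn m hm
    rcases eq_or_lt_of_le (Nat.succ_le_of_lt hm) with he | hlt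
    · rw [show m + 1 = K from he]; exact hmax n hn
    · have hc1 : PP d (m+1) n ≤ 2^d * Gg d (m+1) := PP_le d (m+1) n
      have hc2 : (2:ℤ)^d * Gg d (m+1) = Gg d (m+2) - 1 := mulGg d (m+1)
      have hc3 : Gg d (m+2) ≤ Gg d K := Gg_mono d (by omega)
      have hc4 : Gg d K ≤ PP d K n0 := Gg_le_PP d K n0
      rw [hq0def]
      linarith
  have hPlt : ∀ n ∈ F, ∀ m < K, ¬(n = n0 ∧ m = K-1) → PP d (m+1) n < q0 := by
    intro n hn m hm hne
    rcases eq_or_lt_of_le (Nat.succ_le_of_lt hm) with he | hlt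
    · have hne' : n ≠ n0 := fun h => hne ⟨h, by omega⟩
      rcases lt_or_eq_of_le (hPle n hn m hm) with h | h
      · exact h
      · exfalso
        have heq : PP d (m+1) n = PP d K n0 := by rw [h, hq0def]
        
        have := PP_inj d hd K r a h2K (m+1) K (by omega) le_rfl n n0
          (hFcoord n hn) (hFcoord n0 hn0F) heq
        exact hne' this.2
    · have hc1 : PP d (m+1) n ≤ 2^d * Gg d (m+1) := PP_le d (m+1) n
      have hc2 : (2:ℤ)^d * Gg d (m+1) = Gg d (m+2) - 1 := mulGg d (m+1)
      have hc3 : Gg d (m+2) ≤ Gg d K := Gg_mono d (by omega)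
      have hc4 : Gg d K ≤ PP d K n0 := Gg_le_PP d K n0
      rw [hq0def]
      linarith
  -- the integer head
  set Tz : ℤ := ∑ p ∈ F ×ˢ Finset.range K, σ p.1 * 3^((q0 - PP d (p.2+1) p.1).toNat)
    with hTzdef
  have hterm2 : ∀ p ∈ F ×ˢ Finset.range K, ((σ p.1 : ℝ)) * (3:ℝ)^(1 - PP d (p.2+1) p.1)
      = (3:ℝ)^(1 - q0) * ((σ p.1 : ℝ) * (3:ℝ)^((q0 - PP d (p.2+1) p.1).toNat)) := by
    intro p hp
    obtain ⟨hp1, hp2⟩ := Finset.mem_product.mp hp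
    have hle := hPle p.1 hp1 p.2 (Finset.mem_range.mp hp2)
    have he : ((q0 - PP d (p.2+1) p.1).toNat : ℤ) = q0 - PP d (p.2+1) p.1 :=
      Int.toNat_of_nonneg (by linarith)
    have hz : (3:ℝ)^(1 - PP d (p.2+1) p.1)
        = (3:ℝ)^(1 - q0) * (3:ℝ)^((q0 - PP d (p.2+1) p.1).toNat) := by
      rw [← zpow_natCast (3:ℝ) ((q0 - PP d (p.2+1) p.1).toNat), he,
        ← zpow_add₀ (by norm_num : (3:ℝ) ≠ 0)]
      congr 1; ring
    rw [hz]; ring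
  have hA : A = (3:ℝ)^(1-q0) * (Tz:ℝ) := by
    have hcast : (Tz:ℝ) = ∑ p ∈ F ×ˢ Finset.range K,
        (σ p.1:ℝ) * (3:ℝ)^((q0 - PP d (p.2+1) p.1).toNat) := by
      rw [hTzdef]; push_cast; rfl
    calc A = ∑ p ∈ F ×ˢ Finset.range K, (σ p.1:ℝ) * (3:ℝ)^(1 - PP d (p.2+1) p.1) := by
          rw [hAdef, Finset.sum_product]
          exact Finset.sum_congr rfl fun n _ => by rw [hlowsdef, Finset.mul_sum]
    _ = ∑ p ∈ F ×ˢ Finset.range K,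
          (3:ℝ)^(1-q0) * ((σ p.1:ℝ) * (3:ℝ)^((q0 - PP d (p.2+1) p.1).toNat)) :=
          Finset.sum_congr rfl hterm2
    _ = (3:ℝ)^(1-q0) * (Tz:ℝ) := by rw [← Finset.mul_sum, hcast]
  -- Tz is a nonzero integer
  have hσ0 : σ n0 = 1 ∨ σ n0 = -1 := by
    have := (hF n0).mp hn0F
    rcases hσ n0 with h | h | h
    · right; exact h
    · exact absurd h this
    · left; exact h
  have hTz1 : 1 ≤ |Tz| := by
    have hp0 : (n0, K-1) ∈ F ×ˢ Finset.range K :=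
      Finset.mem_product.mpr ⟨hn0F, Finset.mem_range.mpr (by omega)⟩
    have hsplitTz := Finset.add_sum_erase (F ×ˢ Finset.range K)
      (fun p => σ p.1 * 3^((q0 - PP d (p.2+1) p.1).toNat)) hp0
    have hexp0 : (q0 - PP d ((K-1)+1) n0).toNat = 0 := by
      have hKK : (K-1)+1 = K := by omega
      rw [hKK, hq0def]
      simp
    have hdvd : (3:ℤ) ∣ ∑ p ∈ (F ×ˢ Finset.range K).erase (n0, K-1),
        σ p.1 * 3^((q0 - PP d (p.2+1) p.1).toNat) := by
      refine Finset.dvd_sum fun p hp => ?_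
      obtain ⟨hpne, hpmem⟩ := Finset.mem_erase.mp hp
      obtain ⟨hp1, hp2⟩ := Finset.mem_product.mp hpmem
      have hlt := hPlt p.1 hp1 p.2 (Finset.mem_range.mp hp2)
        (fun ⟨h1, h2⟩ => hpne (Prod.ext h1 h2))
      have hexp1 : (q0 - PP d (p.2+1) p.1).toNat ≠ 0 := by omega
      exact Dvd.dvd.mul_left (dvd_pow_self 3 hexp1) _
    obtain ⟨t, ht⟩ := hdvd
    have hTzet : Tz = σ n0 * 3^((q0 - PP d ((K-1)+1) n0).toNat) + 3*t := by
      rw [hTzdef, ← hsplitTz, ht]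
    rw [hexp0, pow_zero, mul_one] at hTzet
    have hne : Tz ≠ 0 := by rcases hσ0 with h1 | h1 <;> omega
    exact Int.one_le_abs hne
  have hApos : (3:ℝ)^(1-q0) ≤ |A| := by
    have hzp : (0:ℝ) < (3:ℝ)^(1-q0) := zpow_pos (by norm_num) _
    rw [hA, abs_mul, abs_of_pos hzp]
    have hc : (1:ℝ) ≤ |(Tz:ℝ)| := by
      rw [← Int.cast_abs]
      exact_mod_cast hTz1
    nlinarith
  -- the tail
  set t : (↥F × ℕ) → ℝ := fun p => (3:ℝ)^(1 - PP d (p.2+K+1) (p.1:Fin d → ℤ)) with htdef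
  have ht_nonneg : ∀ p, 0 ≤ t p := fun p => (zpow_pos (by norm_num) _).le
  have hts : Summable t := by
    rw [summable_prod_of_nonneg ht_nonneg]
    constructor
    · intro x
      have hs := (summable_nat_add_iff K).mpr (summable_h d (x:Fin d → ℤ))
      exact Summable.congr hs (fun j => hterm d (j+K+1) (x:Fin d → ℤ))
    · exact Summable.of_finite
  have hBsum : ∑ n ∈ F, tails n = ∑' p : ↥F × ℕ, t p := by
    rw [Summable.tsum_prod hts, tsum_fintype, ← Finset.sum_coe_sort F tails]
  have hPtail : ∀ (p : ↥F × ℕ), q0 + 1 ≤ PP d (p.2+K+1) (p.1 : Fin d → ℤ) := by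
    intro p
    have h1 : Gg d (K+1) ≤ Gg d (p.2+K+1) := Gg_mono d (by omega)
    have h2 : Gg d (p.2+K+1) ≤ PP d (p.2+K+1) (p.1 : Fin d → ℤ) := Gg_le_PP d _ _
    linarith
  set e : (↥F × ℕ) → ℕ := fun p => (PP d (p.2+K+1) (p.1:Fin d → ℤ)).toNat with hedef
  have hePP : ∀ p : ↥F × ℕ, ((e p : ℕ) : ℤ) = PP d (p.2+K+1) (p.1:Fin d → ℤ) := by
    intro p
    rw [hedef]
    exact Int.toNat_of_nonneg (by linarith [hPtail p])
  have he_inj : Function.Injective e := by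
    intro p p' hpp
    have heq : PP d (p.2+K+1) (p.1:Fin d → ℤ) = PP d (p'.2+K+1) (p'.1:Fin d → ℤ) := by
      rw [← hePP p, ← hePP p', hpp]
    obtain ⟨hm, hn⟩ := PP_inj d hd K r a h2K (p.2+K+1) (p'.2+K+1) (by omega) (by omega)
      (p.1:Fin d → ℤ) (p'.1:Fin d → ℤ) (hFcoord _ p.1.2) (hFcoord _ p'.1.2) heq
    exact Prod.ext (Subtype.ext hn) (by omega)
  set g : ℕ → ℝ := fun q => if Q + 1 ≤ q then (3:ℝ)^(1 - (q:ℤ)) else 0 with hgdef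
  have hg_nonneg : ∀ q, 0 ≤ g q := by
    intro q
    rw [hgdef]
    dsimp only
    split
    · exact (zpow_pos (by norm_num) _).le
    · exact le_refl 0
  have hg_le : ∀ q, g q ≤ 3 * ((3:ℝ)⁻¹)^q := by
    intro q
    rw [hgdef]
    dsimp only
    split
    · have : (3:ℝ)^(1 - (q:ℤ)) = 3 * ((3:ℝ)⁻¹)^q := by
        rw [sub_eq_add_neg, zpow_add₀ (by norm_num : (3:ℝ) ≠ 0), zpow_one, zpow_neg,
          zpow_natCast, ← inv_pow]
      rw [this]
    · positivity
  have hg_summable : Summable g :=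
    Summable.of_nonneg_of_le hg_nonneg hg_le
      ((summable_geometric_of_lt_one (by norm_num) (by norm_num)).mul_left 3)
  have ht_le : ∀ p, t p ≤ g (e p) := by
    intro p
    have h1 := hPtail p
    have hcond : Q + 1 ≤ e p := by
      have : (Q:ℤ) + 1 ≤ (e p : ℤ) := by rw [hQ, hePP p]; linarith
      exact_mod_cast this
    have h2 : g (e p) = (3:ℝ)^(1 - ((e p : ℕ):ℤ)) := by
      rw [hgdef]; dsimp only; rw [if_pos hcond]
    refine le_of_eq ?_
    rw [htdef]
    dsimp only
    rw [h2, hePP p]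
  have h_tail_le : ∑' p : ↥F × ℕ, t p ≤ ∑' q : ℕ, g q :=
    Summable.tsum_le_tsum_of_inj e he_inj (fun c _ => hg_nonneg c) ht_le hts hg_summable
  have hgsum : ∑' q : ℕ, g q = 3/2 * (3:ℝ)^(-q0) := by
    have h0 := Summable.sum_add_tsum_nat_add (Q+1) hg_summable
    have hz : ∑ q ∈ Finset.range (Q+1), g q = 0 := by
      refine Finset.sum_eq_zero fun q hq => ?_
      have := Finset.mem_range.mp hq
      rw [hgdef]
      simp only
      rw [if_neg (by omega)]
    have hshift : ∀ i:ℕ, g (i + (Q+1)) = (3:ℝ)^(-q0) * ((3:ℝ)⁻¹)^i := by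
      intro i
      rw [hgdef]
      simp only
      rw [if_pos (by omega)]
      have hexp : 1 - ((i + (Q+1) : ℕ) : ℤ) = -q0 + (-(i:ℤ)) := by
        push_cast
        rw [← hQ]
        push_cast
        ring
      rw [hexp, zpow_add₀ (by norm_num : (3:ℝ) ≠ 0)]
      congr 1
      rw [zpow_neg, zpow_natCast, ← inv_pow]
    have hgeo : ∑' i : ℕ, ((3:ℝ)⁻¹)^i = (1 - 3⁻¹)⁻¹ :=
      tsum_geometric_of_lt_one (by norm_num) (by norm_num)
    have h1 : ∑' i : ℕ, g (i + (Q+1)) = (3:ℝ)^(-q0) * (1 - 3⁻¹)⁻¹ := by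
      rw [tsum_congr hshift, tsum_mul_left, hgeo]
    rw [← h0, hz, h1, zero_add]
    norm_num [mul_comm]
  have htails_nonneg : ∀ n, 0 ≤ tails n := by
    intro n
    rw [htailsdef]
    exact tsum_nonneg fun j => (zpow_pos (by norm_num) _).le
  have hσabs : ∀ n, |(σ n:ℝ)| ≤ 1 := by
    intro n
    rcases hσ n with h | h | h <;> simp [h]
  have hB : |B| ≤ 3/2 * (3:ℝ)^(-q0) := by
    calc |B| ≤ ∑ n ∈ F, |(σ n:ℝ) * tails n| := by
          rw [hBdef]; exact Finset.abs_sum_le_sum_abs _ _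
    _ ≤ ∑ n ∈ F, tails n := by
          refine Finset.sum_le_sum fun n _ => ?_
          rw [abs_mul, abs_of_nonneg (htails_nonneg n)]
          nlinarith [hσabs n, htails_nonneg n, abs_nonneg ((σ n : ℝ))]
    _ = ∑' p : ↥F × ℕ, t p := hBsum
    _ ≤ ∑' q : ℕ, g q := h_tail_le
    _ = 3/2 * (3:ℝ)^(-q0) := hgsum
  -- assemble
  have h31 : (3:ℝ)^(1-q0) = 3 * (3:ℝ)^(-q0) := by
    rw [sub_eq_add_neg, zpow_add₀ (by norm_num : (3:ℝ) ≠ 0), zpow_one]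
  have hXlb : 3/2 * (3:ℝ)^(-q0) ≤ |∑' n : Fin d → ℤ, (σ n : ℝ) * hpot d n| := by
    rw [hXsum, hXAB]
    have habs : |A| - |B| ≤ |A + B| := by
      have h1 : |A| ≤ |A + B| + |B| := by
        calc |A| = |(A + B) + (-B)| := by ring_nf
        _ ≤ |A + B| + |(-B)| := abs_add_le _ _
        _ = |A + B| + |B| := by rw [abs_neg]
      linarith
    have : 3/2 * (3:ℝ)^(-q0) ≤ |A| - |B| := by
      rw [h31] at hApos
      linarith
    linarith
  have hrhs : 2 * (3:ℝ)^(-(2^(d-1):ℤ)) * (3:ℝ)^(-((8^d*r^d:ℕ):ℤ)) ≤ 3/2 * (3:ℝ)^(-q0) := by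
    have h1 : (3:ℝ)^(-(2^(d-1):ℤ)) ≤ (3:ℝ)^(-1:ℤ) := by
      refine zpow_le_zpow_right₀ (by norm_num) ?_
      have : (1:ℤ) ≤ 2^(d-1) := one_le_pow₀ (by norm_num)
      linarith
    have h2 : (3:ℝ)^(-((8^d*r^d:ℕ):ℤ)) ≤ (3:ℝ)^(-q0) :=
      zpow_le_zpow_right₀ (by norm_num) (by linarith)
    have hp1 : (0:ℝ) < (3:ℝ)^(-((8^d*r^d:ℕ):ℤ)) := zpow_pos (by norm_num) _
    have hp2 : (0:ℝ) < (3:ℝ)^(-q0) := zpow_pos (by norm_num) _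
    have hp3 : (0:ℝ) < (3:ℝ)^(-(2^(d-1):ℤ)) := zpow_pos (by norm_num) _
    have hm1 : (3:ℝ)^(-1:ℤ) = 1/3 := by norm_num
    calc 2 * (3:ℝ)^(-(2^(d-1):ℤ)) * (3:ℝ)^(-((8^d*r^d:ℕ):ℤ))
        ≤ 2 * (1/3) * (3:ℝ)^(-q0) := by
          rw [← hm1]
          have := mul_le_mul h1 h2 hp1.le (by norm_num : (0:ℝ) ≤ (3:ℝ)^(-1:ℤ))
          nlinarith
    _ ≤ 3/2 * (3:ℝ)^(-q0) := by nlinarith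
  linarith

/-- **globally non-resonant dyadic–triadic model.** For `d ≥ 1`, the
dyadic–triadic potential satisfies `0 < h_n ≤ 2`, and for every `r_* ≥ 1`, every center
`a ∈ ℤ^d`, and every `σ : ℤ^d → {−1,0,1}` supported in the ℓ¹-ball `B_{r_*}(a)` and not
identically zero, `|∑_n σ_n h_n| ≥ 2·3^{−2^{d−1}}·3^{−8^d r_*^d}`. -/
theorem stmt_6 (d : ℕ) (hd : 1 ≤ d) :
    (∀ n : Fin d → ℤ, 0 < hpot d n ∧ hpot d n ≤ 2) ∧
    (∀ r : ℕ, 1 ≤ r → ∀ a : Fin d → ℤ, ∀ σ : (Fin d → ℤ) → ℤ,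
      (∀ n, σ n = -1 ∨ σ n = 0 ∨ σ n = 1) →
      (∀ n, ¬ ((∑ i, |n i - a i|) ≤ (r : ℤ)) → σ n = 0) →
      (∃ n, σ n ≠ 0) →
      2 * (3 : ℝ) ^ (-(2 ^ (d - 1) : ℤ)) * (3 : ℝ) ^ (-((8 ^ d * r ^ d : ℕ) : ℤ)) ≤
        |∑' n : Fin d → ℤ, (σ n : ℝ) * hpot d n|) := by
  constructor
  · intro n
    exact ⟨hpot_pos d n, hpot_le_two d n⟩
  · intro r hr a σ hσ hsupp hex
    exact stmt6_aux d hd r hr a σ hσ hsupp hex
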